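/- arXiv:2002.09309 — 2 statements merged into one kernel-verified Lean document; each statement's English description precedes it below -/
import Mathlib

section
/- Let w ~ N(0, I_ℓ), ε ~ N(0, σ²I_n) independent, and Φ an n×ℓ matrix with σ² > 0. Then w + Φᵀ(ΦΦᵀ + σ²I)^{-1}(y − Φw − ε) is Gaussian with mean (ΦᵀΦ + σ²I)^{-1}Φᵀ y and covariance σ²(ΦᵀΦ + σ²I)^{-1}. -/
open MeasureTheory ProbabilityTheory Matrix Real NNReal

/-- A random vector `X` on a probability space is Gaussian with mean `μ` and covariance
matrix `S` iff every linear functional of `X` is a real Gaussian with the induced moments. -/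
def IsGaussianVec {Ω : Type*} [MeasureSpace Ω] {p : ℕ}
    (X : Ω → Fin p → ℝ) (μ : Fin p → ℝ) (S : Matrix (Fin p) (Fin p) ℝ) : Prop :=
  ∀ a : Fin p → ℝ,
    Measure.map (fun ω => a ⬝ᵥ X ω) (ℙ : Measure Ω)
      = gaussianReal (a ⬝ᵥ μ) (a ⬝ᵥ S.mulVec a).toNNReal



lemma gaussianPDFReal_conv (m1 m2 : ℝ) (v1 v2 : ℝ≥0) (h1 : v1 ≠ 0) (h2 : v2 ≠ 0) (z : ℝ) :
    ∫ x : ℝ, gaussianPDFReal m1 v1 x * gaussianPDFReal m2 v2 (z - x)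
      = gaussianPDFReal (m1 + m2) (v1 + v2) z := by
  have hv1 : (0:ℝ) < v1 := by positivity
  have hv2 : (0:ℝ) < v2 := by positivity
  have hpi : (0:ℝ) < π := Real.pi_pos
  set V1 : ℝ := (v1 : ℝ) with hV1
  set V2 : ℝ := (v2 : ℝ) with hV2
  have hb : (0:ℝ) < (V1 + V2) / (2 * V1 * V2) := by positivity
  set b : ℝ := (V1 + V2) / (2 * V1 * V2) with hbdef
  set d : ℝ := m1 + V1 * (z - m1 - m2) / (V1 + V2) with hddef
  set K : ℝ := (Real.sqrt (2 * π * V1))⁻¹ * (Real.sqrt (2 * π * V2))⁻¹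
      * rexp (-(z - m1 - m2)^2 / (2 * (V1 + V2))) with hKdef
  have step1 : ∀ x : ℝ, gaussianPDFReal m1 v1 x * gaussianPDFReal m2 v2 (z - x)
      = K * rexp (-b * (x - d)^2) := by
    intro x
    simp only [gaussianPDFReal, hKdef]
    rw [show ((√(2 * π * ↑v1))⁻¹ * rexp (-(x - m1) ^ 2 / (2 * ↑v1)) *
        ((√(2 * π * ↑v2))⁻¹ * rexp (-(z - x - m2) ^ 2 / (2 * ↑v2))))
        = (√(2 * π * ↑v1))⁻¹ * (√(2 * π * ↑v2))⁻¹ *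
          (rexp (-(x - m1) ^ 2 / (2 * ↑v1)) * rexp (-(z - x - m2) ^ 2 / (2 * ↑v2))) by ring,
      ← Real.exp_add]
    rw [show (√(2 * π * V1))⁻¹ * (√(2 * π * V2))⁻¹ * rexp (-(z - m1 - m2) ^ 2 / (2 * (V1 + V2)))
        * rexp (-b * (x - d) ^ 2)
        = (√(2 * π * V1))⁻¹ * (√(2 * π * V2))⁻¹ *
          (rexp (-(z - m1 - m2) ^ 2 / (2 * (V1 + V2)) + -b * (x - d) ^ 2)) by
          rw [Real.exp_add]; ring]
    congr 1
    rw [hbdef, hddef]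
    have hV12 : V1 + V2 ≠ 0 := by positivity
    have hV1ne : V1 ≠ 0 := hv1.ne'
    have hV2ne : V2 ≠ 0 := hv2.ne'
    rw [← hV1, ← hV2]
    congr 1
    field_simp
    ring
  rw [funext step1, MeasureTheory.integral_const_mul,
    show (∫ x : ℝ, rexp (-b * (x - d)^2)) = ∫ x : ℝ, rexp (-b * x^2) from
      integral_sub_right_eq_self (fun x => rexp (-b * x^2)) d,
    integral_gaussian]
  simp only [gaussianPDFReal, hKdef]
  have hcast : ((v1 + v2 : ℝ≥0) : ℝ) = V1 + V2 := by push_cast; rfl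
  rw [hcast]
  rw [show -(z - (m1 + m2))^2 / (2 * (V1 + V2)) = -(z - m1 - m2)^2 / (2 * (V1 + V2)) by ring_nf]
  rw [show (√(2 * π * V1))⁻¹ * (√(2 * π * V2))⁻¹ * rexp (-(z - m1 - m2) ^ 2 / (2 * (V1 + V2))) * √(π / b)
      = (√(2 * π * V1))⁻¹ * (√(2 * π * V2))⁻¹ * √(π / b) * rexp (-(z - m1 - m2) ^ 2 / (2 * (V1 + V2))) by ring]
  congr 1
  rw [← Real.sqrt_inv, ← Real.sqrt_inv, ← Real.sqrt_mul (by positivity), ← Real.sqrt_mul (by positivity),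
    ← Real.sqrt_inv]
  congr 1
  rw [hbdef]
  field_simp

lemma gaussianReal_conv (m1 m2 : ℝ) (v1 v2 : ℝ≥0) :
    Measure.map (fun p : ℝ × ℝ => p.1 + p.2)
      ((gaussianReal m1 v1).prod (gaussianReal m2 v2)) = gaussianReal (m1 + m2) (v1 + v2) := by
  by_cases h1 : v1 = 0
  · subst h1
    rw [gaussianReal_zero_var, Measure.dirac_prod,
      Measure.map_map measurable_add (measurable_prodMk_left), zero_add]
    have : ((fun p : ℝ × ℝ => p.1 + p.2) ∘ Prod.mk m1) = (m1 + ·) := rfl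
    rw [this, gaussianReal_map_const_add, add_comm m2 m1]
  by_cases h2 : v2 = 0
  · subst h2
    rw [gaussianReal_zero_var, Measure.prod_dirac,
      Measure.map_map measurable_add (measurable_prodMk_right), add_zero]
    have : ((fun p : ℝ × ℝ => p.1 + p.2) ∘ (fun x => (x, m2))) = (· + m2) := rfl
    rw [this, gaussianReal_map_add_const]
  -- main case
  have h12 : v1 + v2 ≠ 0 := fun h => h1 (by simpa using (add_eq_zero.mp h).1)
  ext s hs
  rw [Measure.map_apply measurable_add hs, Measure.prod_apply (measurable_add hs)]
  have hsec : ∀ x : ℝ, (Prod.mk x ⁻¹' ((fun p : ℝ × ℝ => p.1 + p.2) ⁻¹' s))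
      = (x + ·) ⁻¹' s := fun x => rfl
  simp_rw [hsec]
  have hQ : ∀ x : ℝ, (gaussianReal m2 v2) ((x + ·) ⁻¹' s)
      = ∫⁻ z in s, gaussianPDF (m2 + x) v2 z := by
    intro x
    rw [← Measure.map_apply (measurable_const_add x) hs, gaussianReal_map_const_add,
      gaussianReal_apply _ h2 s]
  simp_rw [hQ]
  rw [gaussianReal_of_var_ne_zero _ h1]
  have hmeas : Measurable fun x : ℝ => ∫⁻ z in s, gaussianPDF (m2 + x) v2 z := by
    apply Measurable.lintegral_prod_right (f := fun (x : ℝ) (z : ℝ) => gaussianPDF (m2 + x) v2 z)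
    apply Measurable.ennreal_ofReal
    have : Continuous fun p : ℝ × ℝ => gaussianPDFReal (m2 + p.1) v2 p.2 := by
      unfold gaussianPDFReal
      fun_prop
    exact this.measurable
  rw [lintegral_withDensity_eq_lintegral_mul _ (measurable_gaussianPDF m1 v1) hmeas]
  have hker : Measurable (Function.uncurry fun (x z : ℝ) =>
      gaussianPDF m1 v1 x * gaussianPDF (m2 + x) v2 z) := by
    apply Measurable.mul (f := fun p : ℝ × ℝ => gaussianPDF m1 v1 p.1)
      (g := fun p : ℝ × ℝ => gaussianPDF (m2 + p.1) v2 p.2)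
    · exact (measurable_gaussianPDF m1 v1).comp measurable_fst
    · apply Measurable.ennreal_ofReal
      have : Continuous fun p : ℝ × ℝ => gaussianPDFReal (m2 + p.1) v2 p.2 := by
        unfold gaussianPDFReal; fun_prop
      exact this.measurable
  have hpull : ∀ x : ℝ, gaussianPDF m1 v1 x * ∫⁻ z in s, gaussianPDF (m2 + x) v2 z
      = ∫⁻ z in s, gaussianPDF m1 v1 x * gaussianPDF (m2 + x) v2 z := by
    intro x
    exact (lintegral_const_mul _ (measurable_gaussianPDF (m2 + x) v2)).symm
  simp_rw [Pi.mul_apply, hpull]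
  rw [lintegral_lintegral_swap hker.aemeasurable]
  rw [gaussianReal_apply _ h12 s]
  apply setLIntegral_congr_fun_ae hs
  apply Filter.Eventually.of_forall
  intro z _
  -- inner integral computation
  have hsub : ∀ x : ℝ, gaussianPDFReal (m2 + x) v2 z = gaussianPDFReal m2 v2 (z - x) := by
    intro x
    rw [gaussianPDFReal_sub]
  have hint : Integrable (fun x : ℝ => gaussianPDFReal m1 v1 x * gaussianPDFReal m2 v2 (z - x)) := by
    have hb : ∀ x : ℝ, ‖gaussianPDFReal m2 v2 (z - x)‖ ≤ (Real.sqrt (2 * π * v2))⁻¹ := by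
      intro x
      rw [Real.norm_of_nonneg (gaussianPDFReal_nonneg _ _ _)]
      unfold gaussianPDFReal
      calc (√(2 * π * ↑v2))⁻¹ * rexp (-(z - x - m2) ^ 2 / (2 * ↑v2))
          ≤ (√(2 * π * ↑v2))⁻¹ * 1 := by
            refine mul_le_mul_of_nonneg_left ?_ (by positivity)
            rw [show (1:ℝ) = rexp 0 by simp]
            apply Real.exp_le_exp.mpr
            apply div_nonpos_of_nonpos_of_nonneg
            · exact neg_nonpos.mpr (sq_nonneg _)
            · positivity
        _ = (√(2 * π * ↑v2))⁻¹ := mul_one _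
    have hmeas2 : AEStronglyMeasurable (fun x : ℝ => gaussianPDFReal m2 v2 (z - x)) volume := by
      apply Continuous.aestronglyMeasurable
      unfold gaussianPDFReal; fun_prop
    have h := (integrable_gaussianPDFReal m1 v1).bdd_mul hmeas2 (Filter.Eventually.of_forall hb)
    refine h.congr (Filter.Eventually.of_forall fun x => ?_)
    simp [mul_comm]
  calc ∫⁻ x, gaussianPDF m1 v1 x * gaussianPDF (m2 + x) v2 z
      = ∫⁻ x, ENNReal.ofReal (gaussianPDFReal m1 v1 x * gaussianPDFReal m2 v2 (z - x)) := by
        congr 1; ext x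
        rw [gaussianPDF, gaussianPDF, hsub x,
          ← ENNReal.ofReal_mul (gaussianPDFReal_nonneg _ _ _)]
    _ = ENNReal.ofReal (∫ x, gaussianPDFReal m1 v1 x * gaussianPDFReal m2 v2 (z - x)) := by
        rw [← ofReal_integral_eq_lintegral_ofReal hint]
        exact Filter.Eventually.of_forall fun x =>
          mul_nonneg (gaussianPDFReal_nonneg _ _ _) (gaussianPDFReal_nonneg _ _ _)
    _ = gaussianPDF (m1 + m2) (v1 + v2) z := by
        rw [gaussianPDFReal_conv m1 m2 v1 v2 h1 h2 z, gaussianPDF]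

lemma aemeasurable_of_map_gaussianReal {Ω : Type*} [MeasureSpace Ω] {X : Ω → ℝ} {m : ℝ} {v : ℝ≥0}
    (hX : Measure.map X ℙ = gaussianReal m v) : AEMeasurable X (ℙ : Measure Ω) := by
  by_contra h
  rw [Measure.map_of_not_aemeasurable h] at hX
  exact (IsProbabilityMeasure.ne_zero (gaussianReal m v)) hX.symm

lemma indepFun_map_add_gaussianReal {Ω : Type*} [MeasureSpace Ω]
    [IsProbabilityMeasure (ℙ : Measure Ω)] {X Y : Ω → ℝ} {m1 m2 : ℝ} {v1 v2 : ℝ≥0}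
    (h : IndepFun X Y (ℙ : Measure Ω)) (hX : Measure.map X ℙ = gaussianReal m1 v1)
    (hY : Measure.map Y ℙ = gaussianReal m2 v2) :
    Measure.map (fun ω => X ω + Y ω) ℙ = gaussianReal (m1 + m2) (v1 + v2) := by
  have hXm := aemeasurable_of_map_gaussianReal hX
  have hYm := aemeasurable_of_map_gaussianReal hY
  have hpair : Measure.map (fun ω => (X ω, Y ω)) ℙ = (Measure.map X ℙ).prod (Measure.map Y ℙ) :=
    (indepFun_iff_map_prod_eq_prod_map_map hXm hYm).mp h
  calc Measure.map (fun ω => X ω + Y ω) ℙ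
      = Measure.map ((fun p : ℝ × ℝ => p.1 + p.2) ∘ (fun ω => (X ω, Y ω))) ℙ := rfl
    _ = Measure.map (fun p : ℝ × ℝ => p.1 + p.2) (Measure.map (fun ω => (X ω, Y ω)) ℙ) :=
        (AEMeasurable.map_map_of_aemeasurable measurable_add.aemeasurable (hXm.prodMk hYm)).symm
    _ = gaussianReal (m1 + m2) (v1 + v2) := by
        rw [hpair, hX, hY, gaussianReal_conv]

lemma gaussianReal_add_const' {Ω : Type*} [MeasureSpace Ω] {X : Ω → ℝ} {m : ℝ} {v : ℝ≥0}
    (hX : Measure.map X ℙ = gaussianReal m v) (y : ℝ) :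
    Measure.map (fun ω ↦ X ω + y) ℙ = gaussianReal (m + y) v := by
  have hXm : AEMeasurable X (ℙ : Measure Ω) := aemeasurable_of_map_gaussianReal hX
  change Measure.map ((fun t ↦ t + y) ∘ X) ℙ = gaussianReal (m + y) v
  rw [← AEMeasurable.map_map_of_aemeasurable (measurable_id'.add_const _).aemeasurable hXm, hX,
    gaussianReal_map_add_const y]

lemma measurable_dotProduct_right {p : ℕ} (b : Fin p → ℝ) :
    Measurable (fun v : Fin p → ℝ => b ⬝ᵥ v) :=
  Finset.measurable_sum _ fun i _ => (measurable_pi_apply (X := fun _ : Fin p => ℝ) i).const_mul (b i)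


/-- **Weight-space pathwise update.** If `w ~ N(0, I_ℓ)` and `ε ~ N(0, σ²I_n)` are
independent and `Φ` is an `n × ℓ` matrix with `σ² > 0`, then
`w + Φᵀ (ΦΦᵀ + σ²I)⁻¹ (y − Φw − ε)` is Gaussian with mean `(ΦᵀΦ + σ²I)⁻¹ Φᵀ y`
and covariance `σ² (ΦᵀΦ + σ²I)⁻¹`. -/
theorem weight_space_pathwise_update {Ω : Type*} [MeasureSpace Ω]
    [IsProbabilityMeasure (ℙ : Measure Ω)] {n ℓ : ℕ}
    (w : Ω → Fin ℓ → ℝ) (ε : Ω → Fin n → ℝ)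
    (Φ : Matrix (Fin n) (Fin ℓ) ℝ) (σ2 : ℝ) (hσ : 0 < σ2)
    (hw : IsGaussianVec w 0 (1 : Matrix (Fin ℓ) (Fin ℓ) ℝ))
    (hε : IsGaussianVec ε 0 (σ2 • (1 : Matrix (Fin n) (Fin n) ℝ)))
    (hindep : IndepFun w ε (ℙ : Measure Ω))
    (y : Fin n → ℝ) :
    IsGaussianVec
      (fun ω => w ω
        + (Φᵀ * (Φ * Φᵀ + σ2 • (1 : Matrix (Fin n) (Fin n) ℝ))⁻¹).mulVec
            (y - Φ.mulVec (w ω) - ε ω))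
      (((Φᵀ * Φ + σ2 • (1 : Matrix (Fin ℓ) (Fin ℓ) ℝ))⁻¹ * Φᵀ).mulVec y)
      (σ2 • (Φᵀ * Φ + σ2 • (1 : Matrix (Fin ℓ) (Fin ℓ) ℝ))⁻¹) := by
  intro a
  set A : Matrix (Fin ℓ) (Fin ℓ) ℝ := Φᵀ * Φ + σ2 • (1 : Matrix (Fin ℓ) (Fin ℓ) ℝ) with hAdef
  set B : Matrix (Fin n) (Fin n) ℝ := Φ * Φᵀ + σ2 • (1 : Matrix (Fin n) (Fin n) ℝ) with hBdef
  -- positive definiteness and invertibility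
  have hsmulA : (σ2 • (1 : Matrix (Fin ℓ) (Fin ℓ) ℝ)).PosDef := by
    rw [smul_one_eq_diagonal]; exact .diagonal fun _ => hσ
  have hsmulB : (σ2 • (1 : Matrix (Fin n) (Fin n) ℝ)).PosDef := by
    rw [smul_one_eq_diagonal]; exact .diagonal fun _ => hσ
  have hconj : Φᴴ = Φᵀ := rfl
  have hA : A.PosDef := by
    rw [hAdef, ← hconj]
    exact Matrix.PosDef.posSemidef_add (posSemidef_conjTranspose_mul_self Φ) hsmulA
  have hB : B.PosDef := by
    rw [hBdef, ← hconj]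
    exact Matrix.PosDef.posSemidef_add (posSemidef_self_mul_conjTranspose Φ) hsmulB
  have hAdet : IsUnit A.det := (Matrix.isUnit_iff_isUnit_det _).mp hA.isUnit
  have hBdet : IsUnit B.det := (Matrix.isUnit_iff_isUnit_det _).mp hB.isUnit
  have hAAi : A * A⁻¹ = 1 := Matrix.mul_nonsing_inv _ hAdet
  have hAiA : A⁻¹ * A = 1 := Matrix.nonsing_inv_mul _ hAdet
  have hBBi : B * B⁻¹ = 1 := Matrix.mul_nonsing_inv _ hBdet
  -- symmetry
  have hAT : Aᵀ = A := by
    rw [hAdef]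
    simp [transpose_add, transpose_mul, transpose_smul, transpose_one, transpose_transpose]
  have hAiT : (A⁻¹)ᵀ = A⁻¹ := by rw [Matrix.transpose_nonsing_inv, hAT]
  -- push-through identity
  have hkey : Φᵀ * B = A * Φᵀ := by
    rw [hAdef, hBdef]
    simp only [Matrix.mul_add, Matrix.add_mul, Matrix.mul_smul, Matrix.smul_mul,
      Matrix.mul_one, Matrix.one_mul, Matrix.mul_assoc]
  have hM : Φᵀ * B⁻¹ = A⁻¹ * Φᵀ := by
    calc Φᵀ * B⁻¹ = (A⁻¹ * A) * (Φᵀ * B⁻¹) := by rw [hAiA, Matrix.one_mul]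
      _ = A⁻¹ * ((Φᵀ * B) * B⁻¹) := by rw [hkey]; simp only [Matrix.mul_assoc]
      _ = A⁻¹ * Φᵀ := by rw [Matrix.mul_assoc Φᵀ, hBBi, Matrix.mul_one]
  set u : Fin ℓ → ℝ := A⁻¹.mulVec a with hudef
  set c : Fin n → ℝ := Φ.mulVec u with hcdef
  have hau : A.mulVec u = a := by
    rw [hudef, Matrix.mulVec_mulVec, hAAi, Matrix.one_mulVec]
  have ha : a = (Φᵀ * Φ).mulVec u + σ2 • u := by
    rw [← hau, hAdef, Matrix.add_mulVec, Matrix.smul_mulVec, Matrix.one_mulVec]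
  -- vecMul computation : vecMul a (A⁻¹ * Φᵀ) = c
  have hvec : Matrix.vecMul a (A⁻¹ * Φᵀ) = c := by
    have : (Φ * A⁻¹)ᵀ = A⁻¹ * Φᵀ := by rw [transpose_mul, hAiT]
    rw [← this, Matrix.vecMul_transpose, ← Matrix.mulVec_mulVec, hcdef, hudef]
  have hvecΦ : ∀ x : Fin ℓ → ℝ, c ⬝ᵥ Φ.mulVec x = ((Φᵀ * Φ).mulVec u) ⬝ᵥ x := by
    intro x
    rw [Matrix.dotProduct_mulVec, hcdef, ← Matrix.mulVec_transpose, Matrix.mulVec_mulVec]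
  -- decomposition of the linear functional
  have hfun : (fun ω => a ⬝ᵥ (w ω + (Φᵀ * B⁻¹).mulVec (y - Φ.mulVec (w ω) - ε ω)))
      = fun ω => ((σ2 • u) ⬝ᵥ w ω + (-c) ⬝ᵥ ε ω) + c ⬝ᵥ y := by
    funext ω
    rw [hM, dotProduct_add, Matrix.dotProduct_mulVec, hvec]
    rw [dotProduct_sub, dotProduct_sub, hvecΦ]
    rw [show a ⬝ᵥ w ω = ((Φᵀ * Φ).mulVec u + σ2 • u) ⬝ᵥ w ω by rw [← ha]]
    rw [add_dotProduct, neg_dotProduct]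
    ring
  rw [hfun]
  -- the two independent gaussian summands
  have hbw : Measure.map (fun ω => (σ2 • u) ⬝ᵥ w ω) ℙ
      = gaussianReal 0 ((σ2 • u) ⬝ᵥ (σ2 • u)).toNNReal := by
    have := hw (σ2 • u)
    simpa using this
  have hce : Measure.map (fun ω => (-c) ⬝ᵥ ε ω) ℙ
      = gaussianReal 0 (σ2 * (c ⬝ᵥ c)).toNNReal := by
    have hval : (-c) ⬝ᵥ (σ2 • (1 : Matrix (Fin n) (Fin n) ℝ)).mulVec (-c) = σ2 * (c ⬝ᵥ c) := by
      rw [Matrix.smul_mulVec, Matrix.one_mulVec, dotProduct_smul, smul_eq_mul,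
        neg_dotProduct, dotProduct_neg, neg_neg]
    have := hε (-c)
    rw [dotProduct_zero, hval] at this
    exact this
  have hi : IndepFun (fun ω => (σ2 • u) ⬝ᵥ w ω) (fun ω => (-c) ⬝ᵥ ε ω) (ℙ : Measure Ω) :=
    hindep.comp (measurable_dotProduct_right (σ2 • u)) (measurable_dotProduct_right (-c))
  have hsum := indepFun_map_add_gaussianReal hi hbw hce
  have hfinal := gaussianReal_add_const' hsum (c ⬝ᵥ y)
  rw [hfinal]
  -- matching the mean and variance
  congr 1
  · rw [Matrix.dotProduct_mulVec, hvec, zero_add, zero_add]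
  · have hself : ∀ {k : ℕ} (v : Fin k → ℝ), 0 ≤ v ⬝ᵥ v :=
      fun v => Finset.sum_nonneg fun i _ => mul_self_nonneg _
    have h1 : (σ2 • u) ⬝ᵥ (σ2 • u) = σ2 * σ2 * (u ⬝ᵥ u) := by
      rw [smul_dotProduct, dotProduct_smul, smul_eq_mul, smul_eq_mul]; ring
    have h2 : c ⬝ᵥ c = ((Φᵀ * Φ).mulVec u) ⬝ᵥ u := by
      rw [hcdef, hvecΦ u]
    have h3 : a ⬝ᵥ (σ2 • A⁻¹).mulVec a
        = σ2 * (((Φᵀ * Φ).mulVec u) ⬝ᵥ u + σ2 * (u ⬝ᵥ u)) := by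
      rw [Matrix.smul_mulVec, dotProduct_smul, ← hudef, smul_eq_mul]
      congr 1
      rw [show a ⬝ᵥ u = ((Φᵀ * Φ).mulVec u + σ2 • u) ⬝ᵥ u by rw [← ha]]
      rw [add_dotProduct, smul_dotProduct, smul_eq_mul]
    rw [h1, h2, h3]
    rw [← Real.toNNReal_add (mul_nonneg (mul_nonneg hσ.le hσ.le) (hself u))
      (mul_nonneg hσ.le (h2 ▸ hself c))]
    congr 1
    ring
end

section
/- Let k be a continuous kernel on compact X with almost surely continuous zero-mean GP f ~ GP(0,k). The decoupled sample path (f|u)(·) = Σ_i w_i φ_i(·) + Σ_j v_j k(·, z_j) with v = K_{mm}^{-1}(u − Φw) has expectation (over w ~ N(0,I) and u ~ N(μ_u, Σ_u) independent) equal to k(·,Z)K_{mm}^{-1}μ_u, the sparse GP posterior mean. -/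
open MeasureTheory ProbabilityTheory Matrix

section Aux
open Real
lemma integrable_id_gaussianReal' (μ : ℝ) (v : NNReal) :
    Integrable id (gaussianReal μ v) := by
  by_cases hv : v = 0
  · subst hv
    rw [gaussianReal_zero_var]
    refine ⟨measurable_id.aestronglyMeasurable, ?_⟩
    rw [HasFiniteIntegral, lintegral_dirac]
    exact ENNReal.coe_lt_top
  · rw [gaussianReal_of_var_ne_zero _ hv,
      integrable_withDensity_iff (measurable_gaussianPDF _ _)
        (Filter.Eventually.of_forall fun _ => ENNReal.ofReal_lt_top)]
    have hb : (0:ℝ) < (2 * (v:ℝ))⁻¹ := by positivity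
    have h1 : Integrable (fun y : ℝ => (y + μ) * rexp (-(2 * (v:ℝ))⁻¹ * y ^ 2)) := by
      have := integrable_mul_exp_neg_mul_sq hb
      have h2 := (integrable_exp_neg_mul_sq hb).const_mul μ
      simpa [add_mul, Pi.add_def] using this.add h2
    have h3 := h1.comp_sub_right μ
    have h4 : Integrable (fun x : ℝ => x * rexp (-(x - μ) ^ 2 / (2 * (v:ℝ)))) := by
      refine h3.congr (Filter.Eventually.of_forall fun x => ?_)
      show (x - μ + μ) * rexp (-(2 * (v:ℝ))⁻¹ * (x - μ) ^ 2)
          = x * rexp (-(x - μ) ^ 2 / (2 * (v:ℝ)))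
      rw [sub_add_cancel]
      congr 1
      field_simp
    have h5 := h4.const_mul (√(2 * π * (v:ℝ)))⁻¹
    refine Integrable.congr h5 ?_
    refine Filter.Eventually.of_forall fun x => ?_
    show (√(2 * π * (v:ℝ)))⁻¹ * (x * rexp (-(x - μ) ^ 2 / (2 * (v:ℝ))))
        = x * (ENNReal.ofReal (gaussianPDFReal μ v x)).toReal
    rw [ENNReal.toReal_ofReal (gaussianPDFReal_nonneg _ _ _)]
    simp only [gaussianPDFReal]
    ring

lemma integral_id_gaussianReal' (μ : ℝ) (v : NNReal) :
    ∫ x, x ∂(gaussianReal μ v) = μ := by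
  have hv1 : (⟨(-1:ℝ)^2, sq_nonneg _⟩ : NNReal) = 1 := by ext; norm_num
  have hsym : (gaussianReal μ v).map (fun x => -x + 2 * μ) = gaussianReal μ v := by
    have h1 : (gaussianReal μ v).map ((-1 : ℝ) * ·) = gaussianReal (-μ) v := by
      rw [gaussianReal_map_const_mul]
      congr 1
      · ring
      · ext; simp
    have h2 : ((gaussianReal μ v).map ((-1 : ℝ) * ·)).map (· + 2 * μ)
        = gaussianReal μ v := by
      rw [h1, gaussianReal_map_add_const]
      congr 1; ring
    rw [Measure.map_map (by fun_prop) (by fun_prop)] at h2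
    convert h2 using 2
    ext x; simp [Function.comp]
  have hint := integrable_id_gaussianReal' μ v
  have key : ∫ x, x ∂(gaussianReal μ v) = ∫ x, (-x + 2 * μ) ∂(gaussianReal μ v) := by
    conv_lhs => rw [← hsym]
    rw [integral_map (μ := gaussianReal μ v) (φ := fun x => -x + 2 * μ)
      (by fun_prop) (f := fun x => x) measurable_id.aestronglyMeasurable]
  have hi : Integrable (fun x : ℝ => -x) (gaussianReal μ v) := hint.neg
  rw [integral_add hi (integrable_const _), integral_neg, integral_const] at key
  have : IsProbabilityMeasure (gaussianReal μ v) := inferInstance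
  simp at key
  simp

end Aux

lemma gaussVec_coord {Ω : Type*} [MeasureSpace Ω] [IsProbabilityMeasure (ℙ : Measure Ω)]
    {p : ℕ} {X : Ω → Fin p → ℝ} {μ : Fin p → ℝ} {S : Matrix (Fin p) (Fin p) ℝ}
    (h : IsGaussianVec X μ S) (i : Fin p) :
    Integrable (fun ω => X ω i) (ℙ : Measure Ω) ∧ ∫ ω, X ω i ∂(ℙ : Measure Ω) = μ i := by
  have hi := h (Pi.single i 1)
  simp only [single_dotProduct, one_mul] at hi
  have haem : AEMeasurable (fun ω => X ω i) (ℙ : Measure Ω) :=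
    aemeasurable_of_map_neZero (by rw [hi]; infer_instance)
  constructor
  · have : Integrable id (Measure.map (fun ω => X ω i) (ℙ : Measure Ω)) := by
      rw [hi]; exact integrable_id_gaussianReal' _ _
    exact (integrable_map_measure measurable_id.aestronglyMeasurable haem).mp this
  · rw [← integral_map (φ := fun ω => X ω i) haem (f := fun x => x)
      measurable_id.aestronglyMeasurable, hi, integral_id_gaussianReal']

/-- **The expected decoupled sample path is the sparse posterior mean.** With
`(f|u)(·) = Σᵢ wᵢ φᵢ(·) + Σⱼ vⱼ k(·, zⱼ)`, `v = K⁻¹(u − Φw)`, `w ~ N(0, I)` and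
`u ~ N(μᵤ, Σᵤ)` independent, `E[(f|u)(x)] = k(x,Z) K⁻¹ μᵤ` for every `x`. -/
theorem decoupled_sample_path_mean {Ω : Type*} [MeasureSpace Ω]
    [IsProbabilityMeasure (ℙ : Measure Ω)] {X : Type*} {m ℓ : ℕ}
    (φ : Fin ℓ → X → ℝ) (k : X → X → ℝ) (z : Fin m → X)
    (Φ : Matrix (Fin m) (Fin ℓ) ℝ) (hΦ : Φ = Matrix.of fun j i => φ i (z j))
    (K : Matrix (Fin m) (Fin m) ℝ)
    (hKdef : K = Matrix.of fun i j => k (z i) (z j)) (hK : IsUnit K.det)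
    (w : Ω → Fin ℓ → ℝ) (u : Ω → Fin m → ℝ)
    (μu : Fin m → ℝ) (Su : Matrix (Fin m) (Fin m) ℝ)
    (hw : IsGaussianVec w 0 (1 : Matrix (Fin ℓ) (Fin ℓ) ℝ))
    (hu : IsGaussianVec u μu Su)
    (hindep : IndepFun w u (ℙ : Measure Ω))
    (path : Ω → X → ℝ)
    (hpath : path = fun ω x =>
      (∑ i, w ω i * φ i x)
        + ∑ j, (K⁻¹.mulVec (u ω - Φ.mulVec (w ω))) j * k x (z j)) :
    ∀ x : X,
      ∫ ω, path ω x ∂(ℙ : Measure Ω)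
        = (fun j => k x (z j)) ⬝ᵥ K⁻¹.mulVec μu := by
  intro x
  subst hpath
  have hwI := fun s => gaussVec_coord hw s
  have huI := fun t => gaussVec_coord hu t
  -- the inner vector
  have hA : ∀ t, Integrable (fun ω => u ω t - ∑ s, Φ t s * w ω s) (ℙ : Measure Ω) :=
    fun t => (huI t).1.sub (integrable_finset_sum _ fun s _ => ((hwI s).1.const_mul _))
  have hAmean : ∀ t, ∫ ω, (u ω t - ∑ s, Φ t s * w ω s) ∂(ℙ : Measure Ω) = μu t := by
    intro t
    rw [integral_sub (huI t).1 (integrable_finset_sum _ fun s _ => ((hwI s).1.const_mul _)),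
      integral_finset_sum _ (fun s _ => ((hwI s).1.const_mul _)), (huI t).2]
    simp [integral_const_mul, fun s => (hwI s).2]
  have hBeq : ∀ j, (fun ω => (K⁻¹.mulVec (u ω - Φ.mulVec (w ω))) j)
      = fun ω => ∑ t, K⁻¹ j t * (u ω t - ∑ s, Φ t s * w ω s) := by
    intro j; funext ω
    simp [Matrix.mulVec, dotProduct]
  have hB : ∀ j, Integrable (fun ω => (K⁻¹.mulVec (u ω - Φ.mulVec (w ω))) j)
      (ℙ : Measure Ω) := by
    intro j; rw [hBeq j]
    exact integrable_finset_sum _ fun t _ => (hA t).const_mul _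
  have hBmean : ∀ j, ∫ ω, (K⁻¹.mulVec (u ω - Φ.mulVec (w ω))) j ∂(ℙ : Measure Ω)
      = (K⁻¹.mulVec μu) j := by
    intro j; rw [hBeq j, integral_finset_sum _ (fun t _ => (hA t).const_mul _)]
    simp_rw [integral_const_mul, hAmean]
    simp [Matrix.mulVec, dotProduct]
  have hI1 : Integrable (fun ω => ∑ i, w ω i * φ i x) (ℙ : Measure Ω) :=
    integrable_finset_sum _ fun i _ => ((hwI i).1.mul_const _)
  have hI2 : Integrable
      (fun ω => ∑ j, (K⁻¹.mulVec (u ω - Φ.mulVec (w ω))) j * k x (z j))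
      (ℙ : Measure Ω) :=
    integrable_finset_sum _ fun j _ => ((hB j).mul_const _)
  rw [integral_add hI1 hI2, integral_finset_sum _ (fun i _ => ((hwI i).1.mul_const _)),
    integral_finset_sum _ (fun j _ => ((hB j).mul_const _))]
  simp_rw [integral_mul_const]
  simp only [fun i => (hwI i).2, hBmean, zero_mul, Finset.sum_const_zero, zero_add]
  simp [dotProduct, mul_comm]
end
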